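/- Let M be a left divisibility monoid with hypercube alphabet H. For any a, b in M with b = ya for some hypercube y, and any t > 0, the length-t suffixes of the right normal forms of a and b (as words over H) differ by left multiplication by a word of length < 2 over H: d_H(a_[t], b_[t]) < 2, where d_H is the left directed distance. -/

import Mathlib

section Defs
variable {M : Type*} [Monoid M]

/-- `a` left-divides `b` (`b` is a right multiple of `a`). -/
def LDvd (a b : M) : Prop := ∃ d, b = a * d

/-- `a` right-divides `b` (`b` is a left multiple of `a`). -/
def RDvd (a b : M) : Prop := ∃ d, b = d * a

/-- `a` is an irreducible element of the monoid. -/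
def IsIrred (a : M) : Prop := a ≠ 1 ∧ ∀ b c, a = b * c → b = 1 ∨ c = 1

/-- `c` is a right lcm of `a` and `b`. -/
def IsRightLcm (a b c : M) : Prop :=
  LDvd a c ∧ LDvd b c ∧ ∀ m, LDvd a m → LDvd b m → LDvd c m

/-- `c` is a right lcm of the set `s`. -/
def IsRightLcmSet (s : Set M) (c : M) : Prop :=
  (∀ x ∈ s, LDvd x c) ∧ ∀ m, (∀ x ∈ s, LDvd x m) → LDvd c m

/-- A hypercube: a right lcm of a finite set of irreducible elements. -/
def IsHypercube (h : M) : Prop :=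
  ∃ s : Finset M, (∀ x ∈ s, IsIrred x) ∧ IsRightLcmSet (↑s) h

/-- `h` is the maximal hypercube right-dividing `a`. -/
def IsMaxHC (a h : M) : Prop :=
  IsHypercube h ∧ RDvd h a ∧ ∀ k, IsHypercube k → RDvd k a → RDvd k h

/-- The list `L = [h_p, …, h_1]` of nontrivial hypercubes is a right normal form:
`h_i` is the maximal hypercube right-dividing `h_p ⋯ h_i`. -/
def IsRNF (hmap : M → M) (L : List M) : Prop :=
  (∀ x ∈ L, IsHypercube x ∧ x ≠ 1) ∧
  ∀ n (hn : n < L.length), hmap ((L.take (n + 1)).prod) = L.get ⟨n, hn⟩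

end Defs

/-- A left divisibility monoid: cancellative, generated by its finitely many
irreducibles, any two elements have a left gcd, and every set of left divisors
is a finite distributive lattice under left divisibility. -/
def IsLDM (M : Type*) [Monoid M] : Prop :=
  (∀ a b c : M, a * b = a * c → b = c) ∧
  (∀ a b c : M, b * a = c * a → b = c) ∧
  (∃ S : Finset M, (∀ x ∈ S, IsIrred x) ∧ Submonoid.closure (S : Set M) = ⊤) ∧
  (∀ a b : M, ∃ g, LDvd g a ∧ LDvd g b ∧ ∀ c, LDvd c a → LDvd c b → LDvd c g) ∧
  (∀ a : M, {b : M | LDvd b a}.Finite) ∧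
  (∀ a : M, ∃ i : DistribLattice {b : M // LDvd b a},
      ∀ x y : {b : M // LDvd b a}, i.le x y ↔ LDvd x.1 y.1)

section Basics
variable {M : Type*} [Monoid M]

theorem ldvd_refl (a : M) : LDvd a a := ⟨1, (mul_one a).symm⟩

theorem ldvd_trans {a b c : M} (h1 : LDvd a b) (h2 : LDvd b c) : LDvd a c := by
  obtain ⟨u, rfl⟩ := h1; obtain ⟨v, rfl⟩ := h2; exact ⟨u * v, mul_assoc _ _ _⟩

theorem one_ldvd (a : M) : LDvd 1 a := ⟨a, (one_mul a).symm⟩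

theorem ldvd_mul_right (a b : M) : LDvd a (a * b) := ⟨b, rfl⟩

theorem ldvd_mul_left {a b : M} (c : M) (h : LDvd a b) : LDvd (c * a) (c * b) := by
  obtain ⟨u, rfl⟩ := h; exact ⟨u, (mul_assoc _ _ _).symm⟩

theorem rdvd_refl (a : M) : RDvd a a := ⟨1, (one_mul a).symm⟩

theorem one_rdvd (a : M) : RDvd 1 a := ⟨a, (mul_one a).symm⟩

theorem rdvd_trans {a b c : M} (h1 : RDvd a b) (h2 : RDvd b c) : RDvd a c := by
  obtain ⟨u, rfl⟩ := h1; obtain ⟨v, rfl⟩ := h2; exact ⟨v * u, (mul_assoc _ _ _).symm⟩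

variable (hM : IsLDM M)
include hM

theorem mul_lcancel {a b c : M} (h : a * b = a * c) : b = c := hM.1 a b c h
theorem mul_rcancel {a b c : M} (h : b * a = c * a) : b = c := hM.2.1 a b c h

theorem ldvd_antisymm {x y : M} (h1 : LDvd x y) (h2 : LDvd y x) : x = y := by
  obtain ⟨i, hi⟩ := hM.2.2.2.2.2 y
  letI : DistribLattice {b : M // LDvd b y} := i
  have hle : ∀ u v : {b : M // LDvd b y}, u ≤ v ↔ LDvd u.1 v.1 := hi
  have : (⟨x, h1⟩ : {b : M // LDvd b y}) = ⟨y, ldvd_refl y⟩ :=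
    le_antisymm ((hle _ _).mpr h1) ((hle _ _).mpr h2)
  exact congrArg Subtype.val this

theorem eq_one_of_mul_eq_one {u v : M} (h : u * v = 1) : u = 1 ∧ v = 1 := by
  have hu : u = 1 := ldvd_antisymm hM ⟨v, h.symm⟩ (one_ldvd u)
  subst hu
  exact ⟨rfl, by rwa [one_mul] at h⟩

theorem rdvd_antisymm {x y : M} (h1 : RDvd x y) (h2 : RDvd y x) : x = y := by
  obtain ⟨u, hu⟩ := h1; obtain ⟨v, hv⟩ := h2
  have h3 : (u * v) * y = 1 * y := by
    rw [one_mul, mul_assoc, ← hv, ← hu]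
  have h4 : u * v = 1 := mul_rcancel hM h3
  have := (eq_one_of_mul_eq_one hM h4).2
  rw [hv, this, one_mul]

omit hM in
theorem irred_divisor {ι v : M} (hι : IsIrred ι) (h : LDvd v ι) : v = 1 ∨ v = ι := by
  obtain ⟨w, hw⟩ := h
  rcases hι.2 v w hw with h1 | h1
  · exact Or.inl h1
  · subst h1; rw [mul_one] at hw; exact Or.inr hw.symm

/-- A test for being a hypercube: `z` is the lcm of its irreducible left divisors,
tested among left divisors of `z`. -/
theorem hyp_of_divtest {z : M}
    (hs : ∀ d, LDvd d z → (∀ ι, IsIrred ι → LDvd ι z → LDvd ι d) → LDvd z d) :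
    IsHypercube z := by
  have hfin : {ι : M | IsIrred ι ∧ LDvd ι z}.Finite :=
    (hM.2.2.2.2.1 z).subset (fun ι hι => hι.2)
  refine ⟨hfin.toFinset, ?_, ?_, ?_⟩
  · intro x hx; exact (hfin.mem_toFinset.mp hx).1
  · intro x hx; exact (hfin.mem_toFinset.mp (by exact_mod_cast hx)).2
  · intro m hm
    obtain ⟨g, hgz, hgm, hg⟩ := hM.2.2.2.1 z m
    have : LDvd z g := by
      refine hs g hgz (fun ι hι hιz => hg ι hιz ?_)
      exact hm ι (by exact_mod_cast hfin.mem_toFinset.mpr ⟨hι, hιz⟩)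
    exact ldvd_trans this hgm

/-- π-lemma: inside the divisors of a hypercube `e`, divisibility is detected by
irreducible divisors. -/
theorem pi_lemma {e : M} (he : IsHypercube e) {x b : M} (hx : LDvd x e) (hb : LDvd b e)
    (H : ∀ ι, IsIrred ι → LDvd ι x → LDvd ι b) : LDvd x b := by
  obtain ⟨s, hs_irr, hs_dvd, hs_lcm⟩ := he
  obtain ⟨i, hi⟩ := hM.2.2.2.2.2 e
  letI : DistribLattice {c : M // LDvd c e} := i
  have hle : ∀ u v : {c : M // LDvd c e}, u ≤ v ↔ LDvd u.1 v.1 := hi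
  letI : OrderBot {c : M // LDvd c e} :=
    { bot := ⟨1, one_ldvd e⟩, bot_le := fun u => (hle _ _).mpr (one_ldvd u.1) }
  classical
  set f : M → {c : M // LDvd c e} := fun ι => if h : LDvd ι e then ⟨ι, h⟩ else ⊥ with hf
  set X : {c : M // LDvd c e} := ⟨x, hx⟩ with hX
  set B : {c : M // LDvd c e} := ⟨b, hb⟩ with hB
  have htop : (⟨e, ldvd_refl e⟩ : {c : M // LDvd c e}) = s.sup f := by
    apply le_antisymm
    · apply (hle _ _).mpr
      apply hs_lcm
      intro ι hι
      have hιe : LDvd ι e := hs_dvd ι hι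
      have : f ι ≤ s.sup f := Finset.le_sup (by exact_mod_cast hι)
      rw [hf] at this; simp only [dif_pos hιe] at this
      exact (hle _ _).mp this
    · exact (hle _ _).mpr (s.sup f).2
  have hdecomp : X = X ⊓ s.sup f := by
    rw [← htop]
    exact (inf_eq_left.mpr ((hle _ _).mpr hx)).symm
  have hmain : X ⊓ s.sup f ≤ B := by
    rw [Finset.sup_inf_distrib_left]
    apply Finset.sup_le
    intro ι hι
    have hιirr : IsIrred ι := hs_irr ι hι
    have hιe : LDvd ι e := hs_dvd ι (by exact_mod_cast hι)
    have hfι : f ι = ⟨ι, hιe⟩ := by rw [hf]; simp only [dif_pos hιe]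
    rw [hfι]
    have hsub : LDvd (X ⊓ ⟨ι, hιe⟩).1 ι := (hle _ _).mp inf_le_right
    rcases irred_divisor hιirr hsub with h1 | h1
    · apply (hle _ _).mpr; rw [h1]; exact one_ldvd b
    · apply (hle _ _).mpr; rw [h1]
      apply H ι hιirr
      rw [← h1]; exact (hle _ _).mp inf_le_left
  rw [← hdecomp] at hmain
  exact (hle _ _).mp hmain

end Basics

section KLemmas
variable {M : Type*} [Monoid M] (hM : IsLDM M)
include hM

/-- Join-side residual lemma: if `e` is a hypercube sitting as quotient `y' = c * e`,
`c` divides `P`, and both `P` and `y'` left-divide `V`, then the quotient `τ` from `P`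
to the join `P ⊔ y'` (inside divisors of `V`) is a hypercube. -/
theorem Kplus {V P y' c e : M} (he : IsHypercube e) (hce : y' = c * e)
    (hcP : LDvd c P) (hPV : LDvd P V) (hyV : LDvd y' V) :
    ∃ τ : M, IsHypercube τ ∧ LDvd (P * τ) V ∧ LDvd y' (P * τ) ∧
      ∀ Q, LDvd Q V → LDvd P Q → LDvd y' Q → LDvd (P * τ) Q := by
  obtain ⟨i, hi⟩ := hM.2.2.2.2.2 V
  letI : DistribLattice {b : M // LDvd b V} := i
  have hle : ∀ u v : {b : M // LDvd b V}, u ≤ v ↔ LDvd u.1 v.1 := hi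
  set Phat : {b : M // LDvd b V} := ⟨P, hPV⟩ with hPhat
  set yhat : {b : M // LDvd b V} := ⟨y', hyV⟩ with hyhat
  set J : {b : M // LDvd b V} := Phat ⊔ yhat with hJ
  obtain ⟨τ, hτ⟩ : LDvd P J.1 := (hle _ _).mp le_sup_left
  have hyJ : LDvd y' J.1 := (hle _ _).mp le_sup_right
  have hJV : LDvd J.1 V := J.2
  have hchat : LDvd c V := ldvd_trans hcP hPV
  -- interval lemma: anything between c and y' is c * (divisor of e); more generally
  -- between c and c * w for w | e.
  have hinterval : ∀ (w ξ : M), LDvd w e → LDvd c ξ → LDvd ξ (c * w) →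
      ∃ w', ξ = c * w' ∧ LDvd w' w := by
    intro w ξ hwe hcξ hξcw
    obtain ⟨w', hw'⟩ := hcξ
    refine ⟨w', hw', ?_⟩
    obtain ⟨w2, hw2⟩ := hξcw
    rw [hw', mul_assoc] at hw2
    exact ⟨w2, mul_lcancel hM hw2⟩
  refine ⟨τ, ?_, ?_, ?_, ?_⟩
  · -- τ is a hypercube
    apply hyp_of_divtest hM
    intro d' hd' H
    -- el(d') := P * d'
    have hPd'V : LDvd (P * d') V := by
      refine ldvd_trans (ldvd_mul_left P hd') ?_
      rw [← hτ]; exact hJV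
    set eld : {b : M // LDvd b V} := ⟨P * d', hPd'V⟩ with held
    have hPled : Phat ≤ eld := (hle _ _).mpr ⟨d', rfl⟩
    set γ : {b : M // LDvd b V} := yhat ⊓ eld with hγ
    have hcγ : LDvd c γ.1 := by
      have h1 : LDvd c y' := ⟨e, hce⟩
      have h2 : LDvd c (P * d') := ldvd_trans hcP ⟨d', rfl⟩
      have : (⟨c, hchat⟩ : {b : M // LDvd b V}) ≤ γ :=
        le_inf ((hle _ _).mpr h1) ((hle _ _).mpr h2)
      exact (hle _ _).mp this
    have hγy : LDvd γ.1 y' := (hle _ _).mp inf_le_left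
    obtain ⟨γ₁, hγ₁, hγ₁e⟩ := hinterval e γ.1 (ldvd_refl e) hcγ (by rwa [← hce])
    -- show every irreducible divisor of e divides γ₁
    have hkey : ∀ ι, IsIrred ι → LDvd ι e → LDvd ι γ₁ := by
      intro ι hιirr hιe
      have hcιV : LDvd (c * ι) V := by
        refine ldvd_trans (ldvd_mul_left c hιe) ?_
        rw [← hce]; exact hyV
      set cι : {b : M // LDvd b V} := ⟨c * ι, hcιV⟩ with hcι
      have hcιy : cι ≤ yhat := (hle _ _).mpr
        (show LDvd (c * ι) y' by rw [hce]; exact ldvd_mul_left c hιe)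
      have hcιled : cι ≤ eld → LDvd ι γ₁ := by
        intro hh
        have : cι ≤ γ := le_inf hcιy hh
        have : LDvd (c * ι) (c * γ₁) := by
          have := (hle _ _).mp this
          rwa [hγ₁] at this
        obtain ⟨w, hw⟩ := this
        rw [mul_assoc] at hw
        exact ⟨w, mul_lcancel hM hw⟩
      by_cases hcase : cι ≤ Phat
      · exact hcιled (le_trans hcase hPled)
      -- u_ι : quotient from P to P ⊔ cι
      set Ξ : {b : M // LDvd b V} := Phat ⊔ cι with hΞ
      obtain ⟨u, hu⟩ : LDvd P Ξ.1 := (hle _ _).mp le_sup_left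
      have hΞJ : Ξ ≤ J := sup_le le_sup_left (le_trans hcιy le_sup_right)
      have huτ : LDvd u τ := by
        obtain ⟨w3, hw3⟩ := (hle _ _).mp hΞJ
        rw [hu, mul_assoc] at hw3
        rw [hτ] at hw3
        exact ⟨w3, mul_lcancel hM hw3⟩
      have hune : u ≠ 1 := by
        intro h1
        apply hcase
        have : Ξ.1 = P := by rw [hu, h1, mul_one]
        have : Ξ ≤ Phat := (hle _ _).mpr (by rw [this]; exact ldvd_refl P)
        exact le_trans le_sup_right this
      have huirr : IsIrred u := by
        refine ⟨hune, ?_⟩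
        intro α β hαβ
        have hPαV : LDvd (P * α) V := by
          refine ldvd_trans ?_ Ξ.2
          rw [hu, hαβ, ← mul_assoc]
          exact ⟨β, rfl⟩
        set xhat : {b : M // LDvd b V} := ⟨P * α, hPαV⟩ with hxhat
        have hPx : Phat ≤ xhat := (hle _ _).mpr ⟨α, rfl⟩
        have hxΞ : xhat ≤ Ξ := (hle _ _).mpr (by
          rw [hu, hαβ, ← mul_assoc]; exact ⟨β, rfl⟩)
        have hxsplit : xhat = Phat ⊔ (xhat ⊓ cι) := by
          apply le_antisymm
          · have h1 : xhat = xhat ⊓ (Phat ⊔ cι) := (inf_eq_left.mpr hxΞ).symm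
            calc xhat = xhat ⊓ (Phat ⊔ cι) := h1
              _ = (xhat ⊓ Phat) ⊔ (xhat ⊓ cι) := inf_sup_left _ _ _
              _ ≤ Phat ⊔ (xhat ⊓ cι) := sup_le_sup_right inf_le_right _
          · exact sup_le hPx inf_le_left
        have hcm : LDvd c (xhat ⊓ cι).1 := by
          have : (⟨c, hchat⟩ : {b : M // LDvd b V}) ≤ xhat ⊓ cι := by
            refine le_inf (le_trans ?_ hPx) ((hle _ _).mpr ⟨ι, rfl⟩)
            exact (hle _ _).mpr hcP
          exact (hle _ _).mp this
        obtain ⟨w4, hw4, hw4ι⟩ := hinterval ι (xhat ⊓ cι).1 hιe hcm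
          ((hle _ _).mp inf_le_right)
        rcases irred_divisor hιirr hw4ι with h1 | h1
        · -- xhat ⊓ cι = c, so xhat = Phat, α = 1
          left
          have hm : (xhat ⊓ cι) ≤ Phat := by
            apply (hle _ _).mpr
            rw [hw4, h1, mul_one]; exact hcP
          have : xhat = Phat := le_antisymm (by rw [hxsplit]; exact sup_le le_rfl hm) hPx
          have : P * α = P * 1 := by
            rw [mul_one]
            exact congrArg Subtype.val this
          exact mul_lcancel hM this
        · -- xhat ⊓ cι = cι, so xhat = Ξ, α = u, β = 1
          right
          have hm : cι ≤ (xhat ⊓ cι) := by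
            apply (hle _ _).mpr
            rw [hw4, h1]; exact ldvd_refl _
          have : Ξ ≤ xhat := by
            rw [hxsplit]
            exact sup_le_sup_left (le_antisymm inf_le_right hm).symm.le _
          have hxeq : xhat = Ξ := le_antisymm hxΞ this
          have : P * α = P * u := by
            rw [← hu]; exact congrArg Subtype.val hxeq
          have hαu : α = u := mul_lcancel hM this
          have h5 : u * β = u * 1 := by rw [mul_one]; exact (hαu ▸ hαβ).symm
          exact mul_lcancel hM h5
      -- u is an irreducible divisor of τ, so u | d'
      have hud' : LDvd u d' := H u huirr huτ
      have : Ξ ≤ eld := (hle _ _).mpr (by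
        rw [hu]; exact ldvd_mul_left P hud')
      exact hcιled (le_trans le_sup_right this)
    -- π-lemma gives e | γ₁, hence γ₁ = e, hence yhat ≤ eld
    have heγ₁ : LDvd e γ₁ := pi_lemma hM he (ldvd_refl e) hγ₁e hkey
    have hγ₁e' : γ₁ = e := ldvd_antisymm hM hγ₁e heγ₁
    have hyeld : yhat ≤ eld := by
      have : γ = yhat := by
        apply Subtype.ext
        show γ.1 = y'
        rw [hγ₁, hγ₁e']; exact hce.symm
      rw [← this]; exact inf_le_right
    have hJled : J ≤ eld := sup_le hPled hyeld
    obtain ⟨w5, hw5⟩ := (hle _ _).mp hJled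
    rw [hτ, mul_assoc] at hw5
    exact ⟨w5, mul_lcancel hM hw5⟩
  · rw [← hτ]; exact hJV
  · rw [← hτ]; exact hyJ
  · intro Q hQV hPQ hyQ
    have : J ≤ ⟨Q, hQV⟩ := sup_le ((hle _ _).mpr hPQ) ((hle _ _).mpr hyQ)
    have := (hle _ _).mp this
    rwa [hτ] at this

end KLemmas

section KMeet
variable {M : Type*} [Monoid M] (hM : IsLDM M)
include hM

/-- Meet-side residual lemma: if `V = X * e` with `e` a hypercube and `V = A * d₁`,
then the quotient `A₁` of `A` over the meet `g = X ⊓ A` is a hypercube, and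
`A₁ * d₁ = c₁ * e` where `X = g * c₁`. -/
theorem Kmeet {V X e A d₁ : M} (he : IsHypercube e) (h1 : V = X * e) (h2 : V = A * d₁) :
    ∃ g A₁ c₁ : M, A = g * A₁ ∧ X = g * c₁ ∧ IsHypercube A₁ ∧ A₁ * d₁ = c₁ * e := by
  obtain ⟨i, hi⟩ := hM.2.2.2.2.2 V
  letI : DistribLattice {b : M // LDvd b V} := i
  have hle : ∀ u v : {b : M // LDvd b V}, u ≤ v ↔ LDvd u.1 v.1 := hi
  set Xhat : {b : M // LDvd b V} := ⟨X, ⟨e, h1⟩⟩ with hXhat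
  set Ahat : {b : M // LDvd b V} := ⟨A, ⟨d₁, h2⟩⟩ with hAhat
  set ghat : {b : M // LDvd b V} := Xhat ⊓ Ahat with hghat
  obtain ⟨A₁, hA₁⟩ : LDvd ghat.1 A := (hle _ _).mp inf_le_right
  obtain ⟨c₁, hc₁⟩ : LDvd ghat.1 X := (hle _ _).mp inf_le_left
  set g : M := ghat.1 with hgdef
  have heq : A₁ * d₁ = c₁ * e := by
    apply mul_lcancel hM (a := g)
    rw [← mul_assoc, ← mul_assoc, ← hA₁, ← hc₁, ← h2, ← h1]
  -- interval lemma for [Xhat, Xhat * w] with w | e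
  have hXint : ∀ (w ξ : M), LDvd w e → LDvd X ξ → LDvd ξ (X * w) →
      ∃ w', ξ = X * w' ∧ LDvd w' w := by
    intro w ξ hwe hXξ hξXw
    obtain ⟨w', hw'⟩ := hXξ
    refine ⟨w', hw', ?_⟩
    obtain ⟨w2, hw2⟩ := hξXw
    rw [hw', mul_assoc] at hw2
    exact ⟨w2, mul_lcancel hM hw2⟩
  -- quotient of a join with Xhat is a divisor of e
  have hquot : ∀ ξ : {b : M // LDvd b V}, Xhat ≤ ξ → ∃ w, ξ.1 = X * w ∧ LDvd w e := by
    intro ξ hXξ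
    obtain ⟨w, hw⟩ := (hle _ _).mp hXξ
    refine ⟨w, hw, ?_⟩
    obtain ⟨w2, hw2⟩ := ξ.2
    rw [hw, mul_assoc] at hw2
    have h3 : X * e = X * (w * w2) := by rw [← h1]; exact hw2
    exact ⟨w2, mul_lcancel hM h3⟩
  refine ⟨g, A₁, c₁, hA₁, hc₁, ?_, heq⟩
  apply hyp_of_divtest hM
  intro d' hd' H
  -- goal : LDvd A₁ d'
  have hgA : LDvd g A := ⟨A₁, hA₁⟩
  have hgd'V : LDvd (g * d') V := by
    refine ldvd_trans (ldvd_mul_left g hd') ?_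
    rw [← hA₁]; exact Ahat.2
  set gd : {b : M // LDvd b V} := ⟨g * d', hgd'V⟩ with hgd
  set Φd : {b : M // LDvd b V} := Xhat ⊔ gd with hΦd
  obtain ⟨φd, hφd, hφde⟩ := hquot Φd le_sup_left
  set ΦA : {b : M // LDvd b V} := Xhat ⊔ Ahat with hΦA
  obtain ⟨φA, hφA, hφAe⟩ := hquot ΦA le_sup_left
  -- key: every irreducible divisor of φA divides φd
  have hkey : ∀ ι, IsIrred ι → LDvd ι φA → LDvd ι φd := by
    intro ι hιirr hιφA
    have hXιV : LDvd (X * ι) V := by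
      refine ldvd_trans (ldvd_mul_left X hιφA) ?_
      rw [← hφA]; exact ΦA.2
    set Xι : {b : M // LDvd b V} := ⟨X * ι, hXιV⟩ with hXι
    have hXιΦA : Xι ≤ ΦA := (hle _ _).mpr (by rw [hφA]; exact ldvd_mul_left X hιφA)
    -- m_ι := Xι ⊓ Ahat, u_ι its quotient over g
    set mι : {b : M // LDvd b V} := Xι ⊓ Ahat with hmι
    have hgmι : ghat ≤ mι := le_inf (le_trans inf_le_left ((hle _ _).mpr ⟨ι, rfl⟩)) inf_le_right
    obtain ⟨u, hu⟩ : LDvd g mι.1 := (hle _ _).mp hgmι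
    have huA₁ : LDvd u A₁ := by
      obtain ⟨w, hw⟩ := (hle _ _).mp (inf_le_right : mι ≤ Ahat)
      rw [hu, mul_assoc] at hw
      have hw' : g * A₁ = g * (u * w) := by rw [← hA₁]; exact hw
      exact ⟨w, mul_lcancel hM hw'⟩
    -- identity : Xhat ⊔ mι = Xι
    have hjoin : Xhat ⊔ mι = Xι := by
      rw [hmι, sup_inf_left]
      have h3 : Xhat ⊔ Xι = Xι := sup_eq_right.mpr ((hle _ _).mpr ⟨ι, rfl⟩)
      have h4 : Xι ≤ Xhat ⊔ Ahat := le_trans hXιΦA le_rfl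
      rw [h3]
      exact inf_eq_left.mpr h4
    have hune : u ≠ 1 := by
      intro h1'
      have : mι = ghat := by
        apply Subtype.ext; rw [hu, h1', mul_one]
      rw [this] at hjoin
      have : Xι ≤ Xhat := by
        rw [← hjoin]; exact sup_le le_rfl inf_le_left
      obtain ⟨w, hw⟩ := (hle _ _).mp this
      have : X * ι = X * 1 := by
        rw [mul_one]
        have h5 : X = X * (ι * w) := by rw [← mul_assoc, ← hw]
        have h6 : X * 1 = X * (ι * w) := by rw [mul_one, ← h5]
        have h7 : (1 : M) = ι * w := mul_lcancel hM h6
        have := (eq_one_of_mul_eq_one hM h7.symm).1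
        rw [this, mul_one]
      exact hιirr.1 (mul_lcancel hM this)
    have huirr : IsIrred u := by
      refine ⟨hune, ?_⟩
      intro α β hαβ
      have hgαV : LDvd (g * α) V := by
        refine ldvd_trans ?_ mι.2
        rw [hu, hαβ, ← mul_assoc]; exact ⟨β, rfl⟩
      set xh : {b : M // LDvd b V} := ⟨g * α, hgαV⟩ with hxh
      have hgx : ghat ≤ xh := (hle _ _).mpr ⟨α, rfl⟩
      have hxm : xh ≤ mι := (hle _ _).mpr (by
        rw [hu, hαβ, ← mul_assoc]; exact ⟨β, rfl⟩)
      -- F1 identity : (Xhat ⊔ xh) ⊓ Ahat = xh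
      have hF1 : (Xhat ⊔ xh) ⊓ Ahat = xh := by
        rw [inf_comm, inf_sup_left]
        have h3 : Ahat ⊓ Xhat = ghat := by rw [hghat, inf_comm]
        have h4 : Ahat ⊓ xh = xh := inf_eq_right.mpr (le_trans hxm inf_le_right)
        rw [h3, h4]
        exact sup_eq_right.mpr hgx
      -- Xhat ⊔ xh lies in [Xhat, Xι]
      have hXx : Xhat ≤ Xhat ⊔ xh := le_sup_left
      have hXxXι : Xhat ⊔ xh ≤ Xι := sup_le ((hle _ _).mpr ⟨ι, rfl⟩)
        (le_trans hxm inf_le_left)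
      obtain ⟨w5, hw5, hw5ι⟩ : ∃ w5, (Xhat ⊔ xh).1 = X * w5 ∧ LDvd w5 ι := by
        obtain ⟨w5, hw5⟩ := (hle _ _).mp hXx
        refine ⟨w5, hw5, ?_⟩
        obtain ⟨w6, hw6⟩ := (hle _ _).mp hXxXι
        rw [hw5, mul_assoc] at hw6
        exact ⟨w6, mul_lcancel hM hw6⟩
      rcases irred_divisor hιirr hw5ι with hc | hc
      · -- Xhat ⊔ xh = Xhat, so xh = ghat, α = 1
        left
        have : xh ≤ Xhat := by
          have h3 : (Xhat ⊔ xh) = Xhat := by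
            apply Subtype.ext; rw [hw5, hc, mul_one]
          rw [← h3]; exact le_sup_right
        have : xh ≤ ghat := le_inf this (le_trans hxm inf_le_right)
        obtain ⟨w7, hw7⟩ := (hle _ _).mp this
        have h8 : g * (α * w7) = g * 1 := by
          rw [mul_one, ← mul_assoc, ← hw7]
        exact (eq_one_of_mul_eq_one hM (mul_lcancel hM h8)).1
      · -- Xhat ⊔ xh = Xι, so xh = mι, α = u
        right
        have h3 : (Xhat ⊔ xh) = Xι := by
          apply Subtype.ext; rw [hw5, hc]
        have h4 : xh = mι := by
          rw [← hF1, h3, hmι]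
        have : g * α = g * u := by
          rw [← hu]
          exact congrArg Subtype.val h4
        have hαu : α = u := mul_lcancel hM this
        have h5 : u * β = u * 1 := by rw [mul_one]; exact (hαu ▸ hαβ).symm
        exact mul_lcancel hM h5
    -- u irreducible divisor of A₁, so u | d'
    have hud' : LDvd u d' := H u huirr huA₁
    -- hence Xι ≤ Φd, i.e. ι | φd
    have hmgd : mι ≤ gd := by
      apply (hle _ _).mpr
      rw [hu]; exact ldvd_mul_left g hud'
    have hXιΦd : Xι ≤ Φd := by
      rw [← hjoin]
      exact sup_le le_sup_left (le_trans hmgd le_sup_right)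
    obtain ⟨w8, hw8⟩ := (hle _ _).mp hXιΦd
    rw [hφd, mul_assoc] at hw8
    exact ⟨w8, mul_lcancel hM hw8⟩
  -- π-lemma gives φA | φd
  have hφAφd : LDvd φA φd := pi_lemma hM he hφAe hφde hkey
  -- hence Ahat ≤ Φd
  have hΦAΦd : ΦA ≤ Φd := (hle _ _).mpr (by
    rw [hφA, hφd]; exact ldvd_mul_left X hφAφd)
  have hAΦd : Ahat ≤ Φd := le_trans le_sup_right hΦAΦd
  have hAgd : Ahat ≤ gd := by
    have h3 : Ahat = Ahat ⊓ Φd := (inf_eq_left.mpr hAΦd).symm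
    have h4 : Ahat ⊓ Φd = (Ahat ⊓ Xhat) ⊔ (Ahat ⊓ gd) := by
      rw [hΦd, inf_sup_left]
    have h5 : Ahat ⊓ Xhat = ghat := by rw [hghat, inf_comm]
    have h6 : ghat ≤ gd := (hle _ _).mpr ⟨d', rfl⟩
    rw [h3, h4, h5]
    exact sup_le h6 inf_le_right
  obtain ⟨w9, hw9⟩ := (hle _ _).mp hAgd
  show LDvd A₁ d'
  have h10 : g * (A₁ * w9) = g * d' := by
    rw [← mul_assoc, ← hA₁, ← hw9]
  exact ⟨w9, (mul_lcancel hM h10).symm⟩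

end KMeet

section Clubs
variable {M : Type*} [Monoid M] (hM : IsLDM M)
include hM

/-- ♣ : any right divisor of `m` that is a product of at most `t` hypercubes
right-divides the length-`t` suffix product of the right normal form of `m`. -/
theorem clubs (hmap : M → M) (hspec : ∀ a : M, IsMaxHC a (hmap a))
    {m : M} {L : List M} (hL : IsRNF hmap L) (hLm : L.prod = m) :
    ∀ t (d : M), RDvd d m →
      (∃ ws : List M, (∀ x ∈ ws, IsHypercube x) ∧ ws.prod = d ∧ ws.length ≤ t) →
      RDvd d ((L.drop (L.length - t)).prod) := by
  intro t
  induction t with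
  | zero =>
    intro d _ ⟨ws, _, hprod, hlen⟩
    have : ws = [] := List.length_eq_zero_iff.mp (Nat.le_zero.mp hlen)
    subst this
    simp only [Nat.sub_zero, List.drop_length, List.prod_nil]
    exact hprod ▸ one_rdvd 1
  | succ t IH =>
    intro d hdm ⟨ws, hws, hprod, hlen⟩
    match ws with
    | [] =>
      simp only [List.prod_nil] at hprod
      exact hprod ▸ one_rdvd _
    | e :: ws' =>
      have he : IsHypercube e := hws e List.mem_cons_self
      set d₀ : M := ws'.prod with hd₀
      have hprod' : d = e * d₀ := by rw [← hprod]; simp [hd₀]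
      have hd₀m : RDvd d₀ m := by
        obtain ⟨C, hC⟩ := hdm
        exact ⟨C * e, by rw [hC, hprod', ← mul_assoc]⟩
      have hIH : RDvd d₀ ((L.drop (L.length - t)).prod) :=
        IH d₀ hd₀m ⟨ws', fun x hx => hws x (List.mem_cons_of_mem _ hx), rfl,
          Nat.le_of_succ_le_succ hlen⟩
      by_cases hlent : L.length ≤ t
      · have h0 : L.length - (t+1) = 0 := by omega
        have h1 : L.length - t = 0 := by omega
        rw [h0, List.drop_zero, hLm]
        rw [h1, List.drop_zero, hLm] at hIH
        exact hdm
      · push_neg at hlent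
        set n : ℕ := L.length - t - 1 with hn
        have hnlt : n < L.length := by omega
        have hd1 : L.length - (t+1) = n := by omega
        have hd2 : L.length - t = n + 1 := by omega
        set A : M := (L.take (n+1)).prod with hA
        set S : M := (L.drop (n+1)).prod with hS
        have hmAS : m = A * S := by
          rw [← hLm, ← List.prod_append, List.take_append_drop]
        rw [hd2] at hIH
        obtain ⟨d₁, hd₁⟩ : RDvd d₀ S := hIH
        obtain ⟨C, hC⟩ := hdm
        have hV : C * e = A * d₁ := by
          apply mul_rcancel hM (a := d₀)
          rw [mul_assoc, mul_assoc, ← hd₁, ← hmAS, hC, hprod', ← mul_assoc]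
        obtain ⟨g, A₁, c₁, hA₁, hc₁, hypA₁, heq⟩ := Kmeet hM he rfl hV
        -- A₁ right-divides hmap A = L.get n
        have hmax : RDvd A₁ (hmap A) := (hspec A).2.2 A₁ hypA₁ ⟨g, hA₁⟩
        have hgetA : hmap A = L.get ⟨n, hnlt⟩ := hL.2 n hnlt
        obtain ⟨κ, hκ⟩ := hmax
        -- S_{t+1} = L.get n * S
        have hdropn : (L.drop n).prod = L.get ⟨n, hnlt⟩ * S := by
          rw [hS, List.drop_eq_getElem_cons hnlt, List.prod_cons]
          rfl
        rw [hd1, hdropn, ← hgetA, hκ]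
        refine ⟨κ * c₁, ?_⟩
        rw [hprod', hd₁]
        calc κ * A₁ * (d₁ * d₀) = κ * (A₁ * d₁) * d₀ := by
              rw [mul_assoc, mul_assoc, mul_assoc]
          _ = κ * (c₁ * e) * d₀ := by rw [heq]
          _ = κ * c₁ * (e * d₀) := by rw [mul_assoc, mul_assoc, mul_assoc]

/-- R″ : a right divisor of a product of hypercubes is a product of at most
as many hypercubes. -/
theorem Rpp : ∀ (ws : List M) (_ : ∀ x ∈ ws, IsHypercube x) (D d : M),
    ws.prod = D * d →
    ∃ vs : List M, (∀ x ∈ vs, IsHypercube x) ∧ vs.prod = d ∧ vs.length ≤ ws.length := by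
  intro ws
  induction ws with
  | nil =>
    intro _ D d hDd
    simp only [List.prod_nil] at hDd
    have hd1 : d = 1 := (eq_one_of_mul_eq_one hM hDd.symm).2
    exact ⟨[], by simp, by simp [hd1], by simp⟩
  | cons h ws' IH =>
    intro hws D d hDd
    rw [List.prod_cons] at hDd
    set W : M := h * ws'.prod with hW
    have hh : IsHypercube h := hws h List.mem_cons_self
    obtain ⟨τ, hτhyp, hPτV, hhPτ, _⟩ := Kplus hM (V := W) (P := D) (c := 1) (y' := h)
      hh (one_mul h).symm (one_ldvd D) ⟨d, hDd⟩ ⟨ws'.prod, rfl⟩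
    obtain ⟨d₂, hd₂⟩ := hPτV
    obtain ⟨P₃, hP₃⟩ := hhPτ
    have hd : d = τ * d₂ := by
      apply mul_lcancel hM (a := D)
      rw [← hDd, hd₂, mul_assoc]
    have hws' : ws'.prod = P₃ * d₂ := by
      apply mul_lcancel hM (a := h)
      rw [← hW, hd₂, hP₃, mul_assoc]

    obtain ⟨vs', hvs', hvsprod, hvslen⟩ := IH (fun x hx => hws x (List.mem_cons_of_mem _ hx))
      P₃ d₂ hws'
    refine ⟨τ :: vs', ?_, ?_, ?_⟩
    · intro x hx
      rcases List.mem_cons.mp hx with h1 | h1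
      · rw [h1]; exact hτhyp
      · exact hvs' x h1
    · rw [List.prod_cons, hvsprod, hd]
    · simp only [List.length_cons]
      omega

end Clubs

/-- Left directed fellow traveller property with constant 2: suffixes of the
right normal forms of `a` and `y * a` stay at left directed distance < 2. -/
theorem stmt_14 {M : Type*} [Monoid M] (hM : IsLDM M)
    (hmap : M → M) (hspec : ∀ a : M, IsMaxHC a (hmap a))
    {a b y : M} (hy : IsHypercube y) (hb : b = y * a)
    {La Lb : List M} (hLa : IsRNF hmap La ∧ La.prod = a)
    (hLb : IsRNF hmap Lb ∧ Lb.prod = b) (t : ℕ) (ht : 0 < t) :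
    ∃ w : List M, (∀ x ∈ w, IsHypercube x) ∧ w.length < 2 ∧
      (w.prod * (La.drop (La.length - t)).prod = (Lb.drop (Lb.length - t)).prod ∨
       (La.drop (La.length - t)).prod = w.prod * (Lb.drop (Lb.length - t)).prod) := by
  obtain ⟨hLa1, hLa2⟩ := hLa
  obtain ⟨hLb1, hLb2⟩ := hLb
  set p : ℕ := La.length with hp
  set q : ℕ := Lb.length with hq
  set Sa : M := (La.drop (p - t)).prod with hSa
  set Sb : M := (Lb.drop (q - t)).prod with hSb
  set Aa : M := (La.take (p - t)).prod with hAa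
  set B : M := (Lb.take (q - t)).prod with hB
  have haAS : a = Aa * Sa := by
    rw [← hLa2, ← List.prod_append, List.take_append_drop]
  have hbBS : b = B * Sb := by
    rw [← hLb2, ← List.prod_append, List.take_append_drop]
  set W : M := y * Aa with hW
  have hbWS : b = W * Sa := by rw [hb, haAS, hW, mul_assoc]
  -- Sa is a product of ≤ t hypercubes
  have hSalist : ∃ ws : List M, (∀ x ∈ ws, IsHypercube x) ∧ ws.prod = Sa ∧ ws.length ≤ t := by
    refine ⟨La.drop (p - t), ?_, rfl, ?_⟩
    · intro x hx; exact (hLa1.1 x (List.mem_of_mem_drop hx)).1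
    · rw [List.length_drop]; omega
  -- Sa right-divides b
  have hSab : RDvd Sa b := ⟨W, hbWS⟩
  -- ♣ on Lb : Sa | Sb
  obtain ⟨z, hz⟩ : RDvd Sa Sb := clubs hM hmap hspec hLb1 hLb2 t Sa hSab hSalist
  -- B * z = W
  have hBz : B * z = W := by
    apply mul_rcancel hM (a := Sa)
    rw [mul_assoc, ← hz, ← hbBS, hbWS]
  -- the join of y and B inside divisors of b
  obtain ⟨i, hi⟩ := hM.2.2.2.2.2 b
  letI : DistribLattice {c : M // LDvd c b} := i
  have hle : ∀ u v : {c : M // LDvd c b}, u ≤ v ↔ LDvd u.1 v.1 := hi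
  set yhat : {c : M // LDvd c b} := ⟨y, ⟨a, hb⟩⟩ with hyhat
  set Bhat : {c : M // LDvd c b} := ⟨B, ⟨Sb, hbBS⟩⟩ with hBhat
  set What : {c : M // LDvd c b} := ⟨W, ⟨Sa, hbWS⟩⟩ with hWhat
  set J : {c : M // LDvd c b} := yhat ⊔ Bhat with hJ
  have hJW : J ≤ What := sup_le ((hle _ _).mpr ⟨Aa, rfl⟩) ((hle _ _).mpr ⟨z, hBz.symm⟩)
  obtain ⟨ν, hν⟩ : LDvd J.1 b := J.2
  -- Sa right-divides ν
  obtain ⟨w₂, hw₂⟩ := (hle _ _).mp hJW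
  have hνw : ν = w₂ * Sa := by
    apply mul_lcancel hM (a := J.1)
    rw [← hν, ← mul_assoc, ← hw₂, ← hbWS]
  -- ν right-divides Sb
  obtain ⟨r₂, hr₂⟩ : LDvd B J.1 := (hle _ _).mp le_sup_right
  have hSbr : Sb = r₂ * ν := by
    apply mul_lcancel hM (a := B)
    rw [← hbBS, ← mul_assoc, ← hr₂, ← hν]
  -- ν right-divides a
  obtain ⟨r₃, hr₃⟩ : LDvd y J.1 := (hle _ _).mp le_sup_left
  have har : a = r₃ * ν := by
    apply mul_lcancel hM (a := y)
    rw [← hb, ← mul_assoc, ← hr₃, ← hν]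
  -- ν is a product of ≤ t hypercubes, using R″
  have hνlist : ∃ vs : List M, (∀ x ∈ vs, IsHypercube x) ∧ vs.prod = ν ∧ vs.length ≤ t := by
    obtain ⟨vs, hvs1, hvs2, hvs3⟩ := Rpp hM (Lb.drop (q - t))
      (fun x hx => (hLb1.1 x (List.mem_of_mem_drop hx)).1) r₂ ν hSbr
    refine ⟨vs, hvs1, hvs2, ?_⟩
    rw [List.length_drop] at hvs3
    omega
  -- ♣ on La : ν | Sa
  obtain ⟨r₄, hr₄⟩ : RDvd ν Sa := clubs hM hmap hspec hLa1 hLa2 t ν ⟨r₃, har⟩ hνlist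
  -- ν = Sa
  have hνSa : ν = Sa := by
    have h1 : (w₂ * r₄) * ν = 1 * ν := by
      rw [one_mul, mul_assoc, ← hr₄, ← hνw]
    have h2 := mul_rcancel hM h1
    have h3 := (eq_one_of_mul_eq_one hM h2).1
    rw [hνw, h3, one_mul]
  -- hence J.1 = W
  have hJWeq : J.1 = W := by
    apply mul_rcancel hM (a := Sa)
    rw [← hbWS, ← hνSa, ← hν]
  -- apply K+ to get that z is a hypercube
  obtain ⟨τ, hτhyp, hBτb, hyBτ, hmin⟩ := Kplus hM (V := b) (P := B) (c := 1) (y' := y)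
    hy (one_mul y).symm (one_ldvd B) ⟨Sb, hbBS⟩ ⟨a, hb⟩
  have h5 : LDvd (B * τ) J.1 := hmin J.1 J.2 ⟨r₂, hr₂⟩ ⟨r₃, hr₃⟩
  have h6 : LDvd J.1 (B * τ) := by
    have : J ≤ ⟨B * τ, hBτb⟩ := sup_le ((hle _ _).mpr hyBτ) ((hle _ _).mpr ⟨τ, rfl⟩)
    exact (hle _ _).mp this
  have h7 : B * τ = J.1 := ldvd_antisymm hM h5 h6
  have h8 : B * τ = B * z := by rw [h7, hJWeq, ← hBz]
  have hτz : τ = z := mul_lcancel hM h8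
  have hzhyp : IsHypercube z := hτz ▸ hτhyp
  refine ⟨[z], ?_, by simp, Or.inl ?_⟩
  · intro x hx
    rw [List.mem_singleton.mp hx]
    exact hzhyp
  · rw [List.prod_singleton]; exact hz.symm
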